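/- Let X be a subordinator with infinite Lévy measure, Laplace exponent Φ, renewal function U(δ) = E[T_δ] where T_δ = ∫₀^∞ 1{X_t ≤ δ} dt. Then for every m ≥ 1, limsup_{δ→0} E[T_δ^m]/U(δ)^m < ∞. -/

import Mathlib

open MeasureTheory Set Filter
open scoped ProbabilityTheory ENNReal

/-- A subordinator: a nondecreasing right-continuous real-valued process started at `0`,
with stationary independent increments, drift `drift` and Lévy measure `levy`, whose
one-dimensional marginals are given by the Lévy–Khintchine formula. -/
structure Subordinator (Ω : Type*) [MeasureSpace Ω] where
  X : ℝ → Ω → ℝ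
  drift : ℝ
  levy : Measure ℝ
  drift_nonneg : 0 ≤ drift
  levy_supp : levy (Iic 0) = 0
  levy_int : ∫⁻ x in Ioi (0 : ℝ), ENNReal.ofReal (min x 1) ∂levy ≠ ⊤
  meas : ∀ t, Measurable (X t)
  init : ∀ ω, X 0 ω = 0
  mono : ∀ ω, MonotoneOn (fun t => X t ω) (Ici 0)
  rightCont : ∀ ω, ∀ t ≥ (0 : ℝ), ContinuousWithinAt (fun s => X s ω) (Ici t) t
  indep : ∀ s t : ℝ, 0 ≤ s → 0 ≤ t →
    ProbabilityTheory.IndepFun (X s) (fun ω => X (s + t) ω - X s ω) ℙ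
  stat : ∀ s t : ℝ, 0 ≤ s → 0 ≤ t →
    Measure.map (fun ω => X (s + t) ω - X s ω) ℙ = Measure.map (X t) ℙ
  laplace : ∀ t ≥ (0 : ℝ), ∀ l ≥ (0 : ℝ),
    ∫ ω, Real.exp (-(l * X t ω)) =
      Real.exp (-(t * (drift * l + ∫ x in Ioi (0 : ℝ), (1 - Real.exp (-(l * x))) ∂levy)))

variable {Ω : Type*} [MeasureSpace Ω]

/-- The process with `δ`-shortened jumps: every jump of size exceeding `δ` is shortened
to have size exactly `δ` (pathwise: subtract the excess of each jump over `δ`). -/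
noncomputable def Subordinator.shortened (S : Subordinator Ω) (δ t : ℝ) (ω : Ω) : ℝ :=
  S.X t ω - ∑' s : Ioc (0 : ℝ) t,
    max (S.X s ω - Function.leftLim (fun u => S.X u ω) s - δ) 0

/-- `L(t,δ) = X̃_t^δ / δ`, the rescaled `δ`-shortened process. -/
noncomputable def Subordinator.L (S : Subordinator Ω) (t δ : ℝ) (ω : Ω) : ℝ :=
  S.shortened δ t ω / δ

/-- `μ(δ) = (d + ∫₀^δ ν̄(x) dx)/δ = (d + ∫ (x∧δ) ν(dx))/δ`. -/
noncomputable def Subordinator.mu (S : Subordinator Ω) (δ : ℝ) : ℝ :=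
  (S.drift + ∫ x in Ioi (0 : ℝ), min x δ ∂S.levy) / δ

/-- `v(δ) = δ⁻¹ (∫ (x∧δ)² ν(dx))^{1/2}`. -/
noncomputable def Subordinator.v (S : Subordinator Ω) (δ : ℝ) : ℝ :=
  δ⁻¹ * Real.sqrt (∫ x in Ioi (0 : ℝ), (min x δ) ^ 2 ∂S.levy)


/-- First passage time `T_δ = Leb{t ≥ 0 : X_t ≤ δ}` of a subordinator. -/
noncomputable def Subordinator.T (S : Subordinator Ω) (δ : ℝ) (ω : Ω) : ℝ :=
  (volume {s : ℝ | 0 ≤ s ∧ S.X s ω ≤ δ}).toReal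

/-- Renewal function `U(δ) = E[T_δ]`. -/
noncomputable def Subordinator.U [IsProbabilityMeasure (ℙ : Measure Ω)]
    (S : Subordinator Ω) (δ : ℝ) : ℝ :=
  ∫ ω, S.T δ ω

namespace Subordinator

/-- The Laplace exponent. -/
noncomputable def Phi (S : Subordinator Ω) (l : ℝ) : ℝ :=
  S.drift * l + ∫ x in Ioi (0 : ℝ), (1 - Real.exp (-(l * x))) ∂S.levy

lemma X_nonneg (S : Subordinator Ω) {t : ℝ} (ht : 0 ≤ t) (ω : Ω) : 0 ≤ S.X t ω := by
  have h := S.mono ω (self_mem_Ici) (mem_Ici.2 ht) ht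
  simpa [S.init ω] using h

lemma integrable_min_one (S : Subordinator Ω) :
    IntegrableOn (fun x => min x 1) (Ioi (0:ℝ)) S.levy := by
  constructor
  · exact (measurable_id.min measurable_const).aestronglyMeasurable
  · rw [hasFiniteIntegral_iff_ofReal ?_]
    · exact lt_top_iff_ne_top.2 S.levy_int
    · filter_upwards [ae_restrict_mem measurableSet_Ioi] with x hx
      exact le_min hx.le one_pos.le

lemma integrable_one_sub_exp (S : Subordinator Ω) {l : ℝ} (hl : 0 ≤ l) :
    IntegrableOn (fun x => 1 - Real.exp (-(l * x))) (Ioi (0:ℝ)) S.levy := by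
  refine Integrable.mono' ((S.integrable_min_one).const_mul (max l 1)) ?_ ?_
  · exact (measurable_const.sub ((measurable_const.mul measurable_id).neg.exp)).aestronglyMeasurable
  · filter_upwards [ae_restrict_mem measurableSet_Ioi] with x hx
    have hlx : 0 ≤ l * x := mul_nonneg hl hx.le
    have h1 : 1 - Real.exp (-(l * x)) ≤ l * x := by
      have := Real.add_one_le_exp (-(l * x))
      linarith
    have h2 : Real.exp (-(l * x)) ≤ 1 := Real.exp_le_one_iff.2 (by linarith)
    rw [Real.norm_eq_abs, abs_of_nonneg (by linarith)]
    rcases le_total x 1 with hx1 | hx1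
    · rw [min_eq_left hx1]
      calc 1 - Real.exp (-(l * x)) ≤ l * x := h1
        _ ≤ max l 1 * x := mul_le_mul_of_nonneg_right (le_max_left _ _) hx.le
    · rw [min_eq_right hx1]
      have : (1:ℝ) ≤ max l 1 := le_max_right _ _
      linarith [Real.exp_pos (-(l * x))]

lemma Phi_pos (S : Subordinator Ω) (hinf : S.levy (Ioi (0:ℝ)) = ⊤) {l : ℝ} (hl : 0 < l) :
    0 < S.Phi l := by
  have hint := S.integrable_one_sub_exp hl.le
  have hae : 0 ≤ᶠ[ae (S.levy.restrict (Ioi 0))] fun x => 1 - Real.exp (-(l * x)) := by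
    filter_upwards [ae_restrict_mem measurableSet_Ioi] with x hx
    have : Real.exp (-(l * x)) ≤ 1 :=
      Real.exp_le_one_iff.2 (by nlinarith [mul_pos hl hx])
    simp only [Pi.zero_apply]
    linarith
  have hpos : 0 < ∫ x in Ioi (0:ℝ), (1 - Real.exp (-(l * x))) ∂S.levy := by
    rw [setIntegral_pos_iff_support_of_nonneg_ae hae hint]
    have hsub : Ioi (0:ℝ) ⊆ Function.support fun x => 1 - Real.exp (-(l * x)) := by
      intro x hx
      have : Real.exp (-(l * x)) < 1 := by
        rw [Real.exp_lt_one_iff]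
        nlinarith [mul_pos hl hx]
      simp only [Function.mem_support]
      intro h; linarith [this, sub_eq_zero.1 h]
    rw [Set.inter_eq_right.2 hsub, hinf]
    exact ENNReal.zero_lt_top
  have : 0 ≤ S.drift * l := mul_nonneg S.drift_nonneg hl.le
  unfold Phi; linarith

variable [IsProbabilityMeasure (ℙ : Measure Ω)]

lemma integrable_exp_neg (S : Subordinator Ω) {t l : ℝ} (ht : 0 ≤ t) (hl : 0 ≤ l) :
    Integrable (fun ω => Real.exp (-(l * S.X t ω))) (ℙ : Measure Ω) := by
  refine Integrable.mono' (integrable_const 1) ?_ (ae_of_all _ fun ω => ?_)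
  · exact (Real.measurable_exp.comp ((S.meas t).const_mul l).neg).aestronglyMeasurable
  · rw [Real.norm_eq_abs, abs_of_pos (Real.exp_pos _)]
    exact Real.exp_le_one_iff.2 (neg_nonpos.2 (mul_nonneg hl (S.X_nonneg ht ω)))

lemma prob_le (S : Subordinator Ω) {δ t : ℝ} (hδ : 0 < δ) (ht : 0 ≤ t) :
    (ℙ {ω | S.X t ω ≤ δ}).toReal ≤ Real.exp 1 * Real.exp (-(t * S.Phi δ⁻¹)) := by
  have hA : MeasurableSet {ω | S.X t ω ≤ δ} := measurableSet_le (S.meas t) measurable_const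
  have hint := S.integrable_exp_neg ht (inv_nonneg.2 hδ.le)
  have h1 : Real.exp (-1) * (ℙ {ω | S.X t ω ≤ δ}).toReal
      ≤ ∫ ω, Real.exp (-(δ⁻¹ * S.X t ω)) := by
    have h2 : ∫ ω in {ω | S.X t ω ≤ δ}, Real.exp (-1) ∂(ℙ : Measure Ω)
        ≤ ∫ ω in {ω | S.X t ω ≤ δ}, Real.exp (-(δ⁻¹ * S.X t ω)) ∂(ℙ : Measure Ω) := by
      refine setIntegral_mono_on (integrableOn_const)
        hint.integrableOn hA fun ω hω => ?_
      refine Real.exp_le_exp.2 (neg_le_neg ?_)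
      calc δ⁻¹ * S.X t ω ≤ δ⁻¹ * δ :=
            mul_le_mul_of_nonneg_left hω (inv_nonneg.2 hδ.le)
        _ = 1 := inv_mul_cancel₀ hδ.ne'
    have h3 : ∫ ω in {ω | S.X t ω ≤ δ}, Real.exp (-(δ⁻¹ * S.X t ω)) ∂(ℙ : Measure Ω)
        ≤ ∫ ω, Real.exp (-(δ⁻¹ * S.X t ω)) :=
      setIntegral_le_integral hint (ae_of_all _ fun ω => (Real.exp_pos _).le)
    rw [setIntegral_const, smul_eq_mul, mul_comm, measureReal_def] at h2
    linarith
  rw [S.laplace t ht δ⁻¹ (inv_nonneg.2 hδ.le)] at h1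
  have h4 : (ℙ {ω | S.X t ω ≤ δ}).toReal
      ≤ Real.exp (-(t * S.Phi δ⁻¹)) / Real.exp (-1) := by
    rw [le_div_iff₀ (Real.exp_pos _)]
    calc (ℙ {ω | S.X t ω ≤ δ}).toReal * Real.exp (-1)
        = Real.exp (-1) * (ℙ {ω | S.X t ω ≤ δ}).toReal := mul_comm _ _
      _ ≤ _ := h1
  calc (ℙ {ω | S.X t ω ≤ δ}).toReal ≤ Real.exp (-(t * S.Phi δ⁻¹)) / Real.exp (-1) := h4
    _ = Real.exp 1 * Real.exp (-(t * S.Phi δ⁻¹)) := by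
        rw [← Real.exp_sub, ← Real.exp_add]; ring_nf

lemma prob_ge (S : Subordinator Ω) {δ t : ℝ} (hδ : 0 < δ) (ht : 0 ≤ t) :
    Real.exp (-(t * S.Phi δ⁻¹)) - Real.exp (-1)
      ≤ (1 - Real.exp (-1)) * (ℙ {ω | S.X t ω ≤ δ}).toReal := by
  set A := {ω | S.X t ω ≤ δ} with hAdef
  have hA : MeasurableSet A := measurableSet_le (S.meas t) measurable_const
  have hint := S.integrable_exp_neg ht (inv_nonneg.2 hδ.le)
  have hsplit : ∫ ω, Real.exp (-(δ⁻¹ * S.X t ω))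
      = (∫ ω in A, Real.exp (-(δ⁻¹ * S.X t ω)) ∂(ℙ : Measure Ω))
        + ∫ ω in Aᶜ, Real.exp (-(δ⁻¹ * S.X t ω)) ∂(ℙ : Measure Ω) :=
    (integral_add_compl hA hint).symm
  have hA1 : ∫ ω in A, Real.exp (-(δ⁻¹ * S.X t ω)) ∂(ℙ : Measure Ω) ≤ (ℙ A).toReal := by
    have := setIntegral_mono_on hint.integrableOn
      (integrableOn_const) hA
      (fun ω _ => Real.exp_le_one_iff.2
        (neg_nonpos.2 (mul_nonneg (inv_nonneg.2 hδ.le) (S.X_nonneg ht ω))) :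
        ∀ ω ∈ A, Real.exp (-(δ⁻¹ * S.X t ω)) ≤ 1)
    simpa [setIntegral_const, measureReal_def] using this
  have hA2 : ∫ ω in Aᶜ, Real.exp (-(δ⁻¹ * S.X t ω)) ∂(ℙ : Measure Ω)
      ≤ Real.exp (-1) * (ℙ Aᶜ).toReal := by
    have := setIntegral_mono_on hint.integrableOn
      (integrableOn_const) hA.compl
      (fun ω hω => ?_ : ∀ ω ∈ Aᶜ, Real.exp (-(δ⁻¹ * S.X t ω)) ≤ Real.exp (-1))
    · simpa [setIntegral_const, mul_comm, measureReal_def] using this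
    · refine Real.exp_le_exp.2 (neg_le_neg ?_)
      have hω' : δ < S.X t ω := not_le.1 hω
      calc (1:ℝ) = δ⁻¹ * δ := (inv_mul_cancel₀ hδ.ne').symm
        _ ≤ δ⁻¹ * S.X t ω := mul_le_mul_of_nonneg_left hω'.le (inv_nonneg.2 hδ.le)
  have hcompl : (ℙ Aᶜ).toReal = 1 - (ℙ A).toReal := by
    rw [measure_compl hA (measure_ne_top _ _), measure_univ]
    rw [ENNReal.toReal_sub_of_le prob_le_one ENNReal.one_ne_top]
    simp
  have hlap := S.laplace t ht δ⁻¹ (inv_nonneg.2 hδ.le)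
  have : Real.exp (-(t * S.Phi δ⁻¹))
      ≤ (ℙ A).toReal + Real.exp (-1) * (1 - (ℙ A).toReal) := by
    rw [← hcompl]
    calc Real.exp (-(t * S.Phi δ⁻¹)) = ∫ ω, Real.exp (-(δ⁻¹ * S.X t ω)) := by
          rw [hlap]; rfl
      _ ≤ _ := by rw [hsplit]; exact add_le_add hA1 hA2
  nlinarith [this]

/-- The occupation time of `[0,δ]` as an extended real. -/
noncomputable def Tlen (S : Subordinator Ω) (δ : ℝ) (ω : Ω) : ℝ≥0∞ :=
  volume {s : ℝ | 0 ≤ s ∧ S.X s ω ≤ δ}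

lemma T_eq_toReal_Tlen (S : Subordinator Ω) (δ : ℝ) (ω : Ω) :
    S.T δ ω = (S.Tlen δ ω).toReal := rfl

lemma Tlen_eq (S : Subordinator Ω) (δ : ℝ) (ω : Ω) :
    S.Tlen δ ω = ⨆ q : ℚ, if 0 ≤ (q:ℝ) ∧ S.X q ω ≤ δ then ENNReal.ofReal q else 0 := by
  set g := ⨆ q : ℚ, if 0 ≤ (q:ℝ) ∧ S.X q ω ≤ δ then ENNReal.ofReal q else 0 with hg_def
  apply le_antisymm
  · by_cases hg : g = ⊤
    · rw [hg]; exact le_top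
    · have hsub : {s : ℝ | 0 ≤ s ∧ S.X s ω ≤ δ} ⊆ Icc 0 g.toReal := by
        rintro s ⟨hs0, hsδ⟩
        refine ⟨hs0, ?_⟩
        by_contra h
        push_neg at h
        obtain ⟨q, hq1, hq2⟩ := exists_rat_btwn h
        have hq0 : 0 ≤ (q:ℝ) := le_trans ENNReal.toReal_nonneg hq1.le
        have hXq : S.X q ω ≤ δ :=
          le_trans (S.mono ω (mem_Ici.2 hq0) (mem_Ici.2 hs0) hq2.le) hsδ
        have hle : ENNReal.ofReal q ≤ g := by
          refine le_iSup_of_le q ?_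
          rw [if_pos ⟨hq0, hXq⟩]
        have := (ENNReal.ofReal_le_iff_le_toReal hg).1 hle
        linarith
      calc S.Tlen δ ω ≤ volume (Icc 0 g.toReal) := measure_mono hsub
        _ = ENNReal.ofReal (g.toReal - 0) := Real.volume_Icc
        _ = g := by rw [sub_zero, ENNReal.ofReal_toReal hg]
  · refine iSup_le fun q => ?_
    split_ifs with h
    · calc ENNReal.ofReal q = volume (Icc (0:ℝ) q) := by
            rw [Real.volume_Icc, sub_zero]
        _ ≤ S.Tlen δ ω := by
            refine measure_mono ?_
            rintro s ⟨hs0, hsq⟩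
            exact ⟨hs0, le_trans (S.mono ω (mem_Ici.2 hs0) (mem_Ici.2 h.1) hsq) h.2⟩
    · exact zero_le

lemma Tlen_measurable (S : Subordinator Ω) (δ : ℝ) : Measurable (S.Tlen δ) := by
  have heq : S.Tlen δ = fun ω =>
      ⨆ q : ℚ, if 0 ≤ (q:ℝ) ∧ S.X q ω ≤ δ then ENNReal.ofReal q else 0 :=
    funext fun ω => S.Tlen_eq δ ω
  rw [heq]
  refine Measurable.iSup fun q => ?_
  by_cases hq : 0 ≤ (q:ℝ)
  · simp only [hq, true_and]
    exact Measurable.ite (measurableSet_le (S.meas q) measurable_const)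
      measurable_const measurable_const
  · simp only [hq, false_and, if_false]
    exact measurable_const

lemma T_measurable (S : Subordinator Ω) (δ : ℝ) : Measurable (S.T δ) :=
  (S.Tlen_measurable δ).ennreal_toReal

lemma T_nonneg (S : Subordinator Ω) (δ : ℝ) (ω : Ω) : 0 ≤ S.T δ ω :=
  ENNReal.toReal_nonneg

lemma Tlen_le_of_gt (S : Subordinator Ω) {δ t : ℝ} (ht : 0 ≤ t) {ω : Ω}
    (h : δ < S.X t ω) : S.Tlen δ ω ≤ ENNReal.ofReal t := by
  have hsub : {s : ℝ | 0 ≤ s ∧ S.X s ω ≤ δ} ⊆ Icc 0 t := by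
    rintro s ⟨hs0, hsδ⟩
    refine ⟨hs0, ?_⟩
    by_contra hst; push_neg at hst
    exact absurd (le_trans (S.mono ω (mem_Ici.2 ht) (mem_Ici.2 hs0) hst.le) hsδ)
      (not_le.2 h)
  calc S.Tlen δ ω ≤ volume (Icc 0 t) := measure_mono hsub
    _ = ENNReal.ofReal t := by rw [Real.volume_Icc, sub_zero]

lemma tail_subset (S : Subordinator Ω) {δ t : ℝ} (ht : 0 ≤ t) :
    {ω | t < S.T δ ω} ⊆ {ω | S.X t ω ≤ δ} := by
  intro ω hω
  by_contra h
  simp only [mem_setOf_eq, not_le] at h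
  have h1 := S.Tlen_le_of_gt ht h
  have h2 : S.T δ ω ≤ t := by
    calc S.T δ ω = (S.Tlen δ ω).toReal := rfl
      _ ≤ (ENNReal.ofReal t).toReal := ENNReal.toReal_mono ENNReal.ofReal_ne_top h1
      _ = t := ENNReal.toReal_ofReal ht
  exact absurd hω (not_lt.2 h2)

lemma T_ge (S : Subordinator Ω) {δ t : ℝ} (ht : 0 ≤ t) {ω : Ω}
    (hfin : S.Tlen δ ω ≠ ⊤) (hX : S.X t ω ≤ δ) : t ≤ S.T δ ω := by
  have hsub : Icc 0 t ⊆ {s : ℝ | 0 ≤ s ∧ S.X s ω ≤ δ} := by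
    rintro s ⟨hs0, hst⟩
    exact ⟨hs0, le_trans (S.mono ω (mem_Ici.2 hs0) (mem_Ici.2 ht) hst) hX⟩
  have h1 : ENNReal.ofReal t ≤ S.Tlen δ ω := by
    calc ENNReal.ofReal t = volume (Icc (0:ℝ) t) := by rw [Real.volume_Icc, sub_zero]
      _ ≤ S.Tlen δ ω := measure_mono hsub
  have := ENNReal.toReal_mono hfin h1
  rwa [ENNReal.toReal_ofReal ht] at this

lemma Tlen_top_null (S : Subordinator Ω) (hinf : S.levy (Ioi (0:ℝ)) = ⊤)
    {δ : ℝ} (hδ : 0 < δ) : (ℙ : Measure Ω) {ω | S.Tlen δ ω = ⊤} = 0 := by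
  have hφ := S.Phi_pos hinf (inv_pos.2 hδ)
  have hsub : ∀ t : ℝ, 0 ≤ t → {ω | S.Tlen δ ω = ⊤} ⊆ {ω | S.X t ω ≤ δ} := by
    intro t ht ω hω
    by_contra h
    simp only [mem_setOf_eq, not_le] at h
    have := S.Tlen_le_of_gt ht h
    rw [show S.Tlen δ ω = ⊤ from hω] at this
    exact absurd this (by simp)
  have hb : ∀ n : ℕ, ((ℙ : Measure Ω) {ω | S.Tlen δ ω = ⊤}).toReal
      ≤ Real.exp 1 * Real.exp (-((n:ℝ) * S.Phi δ⁻¹)) := by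
    intro n
    refine le_trans ?_ (S.prob_le hδ (Nat.cast_nonneg n))
    exact ENNReal.toReal_mono (measure_ne_top _ _)
      (measure_mono (hsub n (Nat.cast_nonneg n)))
  have hlim : Tendsto (fun n : ℕ => Real.exp 1 * Real.exp (-((n:ℝ) * S.Phi δ⁻¹)))
      atTop (nhds 0) := by
    have h1 : Tendsto (fun n : ℕ => -((n:ℝ) * S.Phi δ⁻¹)) atTop atBot := by
      refine tendsto_neg_atBot_iff.2 ?_
      exact Tendsto.atTop_mul_const hφ tendsto_natCast_atTop_atTop
    have h2 := Real.tendsto_exp_atBot.comp h1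
    have := h2.const_mul (Real.exp 1)
    simpa using this
  have h0 : ((ℙ : Measure Ω) {ω | S.Tlen δ ω = ⊤}).toReal ≤ 0 :=
    ge_of_tendsto hlim (Eventually.of_forall hb)
  have h1 : ((ℙ : Measure Ω) {ω | S.Tlen δ ω = ⊤}).toReal = 0 :=
    le_antisymm h0 ENNReal.toReal_nonneg
  rwa [ENNReal.toReal_eq_zero_iff, or_iff_left (measure_ne_top _ _)] at h1

lemma summable_aux {p : ℝ} (hp : 1 ≤ p) {x : ℝ} (hx0 : 0 < x) (hx1 : x < 1) :
    Summable (fun k : ℕ => ((k:ℝ) + 1) ^ p * x ^ k) := by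
  set n := ⌈p⌉₊ with hn
  have hbase : Summable (fun k : ℕ => ((k:ℝ)) ^ n * x ^ k) :=
    summable_pow_mul_geometric_of_norm_lt_one n
      (by rwa [Real.norm_eq_abs, abs_of_pos hx0])
  have hshift : Summable (fun k : ℕ => ((k:ℝ) + 1) ^ n * x ^ (k + 1)) := by
    have := (summable_nat_add_iff 1).2 hbase
    simpa [Nat.cast_add] using this
  have h1 : Summable (fun k : ℕ => ((k:ℝ) + 1) ^ n * x ^ k) := by
    have h2 := hshift.mul_left x⁻¹
    refine h2.congr fun k => ?_
    rw [pow_succ]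
    field_simp
  refine h1.of_nonneg_of_le (fun k => by positivity) fun k => ?_
  have hk1 : (1:ℝ) ≤ (k:ℝ) + 1 := by have := Nat.cast_nonneg (α := ℝ) k; linarith
  have hexp : ((k:ℝ) + 1) ^ p ≤ ((k:ℝ) + 1) ^ (n:ℝ) :=
    Real.rpow_le_rpow_of_exponent_le hk1 (Nat.le_ceil p)
  rw [Real.rpow_natCast] at hexp
  exact mul_le_mul_of_nonneg_right hexp (pow_nonneg hx0.le k)

lemma lintegral_T_rpow_le (S : Subordinator Ω) (hinf : S.levy (Ioi (0:ℝ)) = ⊤)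
    {δ p : ℝ} (hδ : 0 < δ) (hp : 1 ≤ p) :
    ∫⁻ ω, ENNReal.ofReal (S.T δ ω ^ p) ≤
      ENNReal.ofReal ((S.Phi δ⁻¹)⁻¹ ^ p *
        (Real.exp 1 * ∑' k : ℕ, ((k:ℝ) + 1) ^ p * Real.exp (-1) ^ k)) := by
  have hφ := S.Phi_pos hinf (inv_pos.2 hδ)
  set φ := S.Phi δ⁻¹ with hφdef
  set s := φ⁻¹ with hsdef
  have hs : 0 < s := inv_pos.2 hφ
  -- pointwise layercake bound
  have hpt : ∀ ω, ENNReal.ofReal (S.T δ ω ^ p) ≤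
      ∑' k : ℕ, Set.indicator {ω' | (k:ℝ) * s < S.T δ ω'}
        (fun _ => ENNReal.ofReal ((((k:ℝ) + 1) * s) ^ p)) ω := by
    intro ω
    rcases eq_or_lt_of_le (S.T_nonneg δ ω) with hT0 | hT0
    · rw [← hT0, Real.zero_rpow (by linarith : p ≠ 0), ENNReal.ofReal_zero]
      exact zero_le
    · set x := S.T δ ω with hx
      have hxs : 0 < x / s := div_pos hT0 hs
      set nn := ⌈x / s⌉₊ with hnn
      have hnn1 : 1 ≤ nn := Nat.one_le_ceil_iff.2 hxs
      set j := nn - 1 with hj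
      have hjcast : (j:ℝ) = (nn:ℝ) - 1 := by
        rw [hj, Nat.cast_sub hnn1, Nat.cast_one]
      have hlow : (j:ℝ) * s < x := by
        have h1 : (nn:ℝ) < x / s + 1 := Nat.ceil_lt_add_one hxs.le
        have h2 : (j:ℝ) < x / s := by rw [hjcast]; linarith
        calc (j:ℝ) * s < (x / s) * s := by
              exact mul_lt_mul_of_pos_right h2 hs
          _ = x := div_mul_cancel₀ x hs.ne'
      have hhigh : x ≤ ((j:ℝ) + 1) * s := by
        have h1 : x / s ≤ (nn:ℝ) := Nat.le_ceil _
        have h2 : (j:ℝ) + 1 = (nn:ℝ) := by rw [hjcast]; ring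
        rw [h2]
        calc x = (x / s) * s := (div_mul_cancel₀ x hs.ne').symm
          _ ≤ (nn:ℝ) * s := mul_le_mul_of_nonneg_right h1 hs.le
      refine le_trans ?_ (ENNReal.le_tsum j)
      rw [Set.indicator_of_mem (by exact hlow : ω ∈ {ω' | (j:ℝ) * s < S.T δ ω'})]
      exact ENNReal.ofReal_le_ofReal
        (Real.rpow_le_rpow hT0.le hhigh (by linarith))
  have hmeas : ∀ k : ℕ, MeasurableSet {ω' | (k:ℝ) * s < S.T δ ω'} :=
    fun k => measurableSet_lt measurable_const (S.T_measurable δ)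
  calc ∫⁻ ω, ENNReal.ofReal (S.T δ ω ^ p)
      ≤ ∫⁻ ω, ∑' k : ℕ, Set.indicator {ω' | (k:ℝ) * s < S.T δ ω'}
          (fun _ => ENNReal.ofReal ((((k:ℝ) + 1) * s) ^ p)) ω :=
        lintegral_mono hpt
    _ = ∑' k : ℕ, ∫⁻ ω, Set.indicator {ω' | (k:ℝ) * s < S.T δ ω'}
          (fun _ => ENNReal.ofReal ((((k:ℝ) + 1) * s) ^ p)) ω := by
        refine lintegral_tsum fun k => ?_
        exact ((measurable_const.indicator (hmeas k))).aemeasurable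
    _ = ∑' k : ℕ, ENNReal.ofReal ((((k:ℝ) + 1) * s) ^ p) *
          (ℙ : Measure Ω) {ω' | (k:ℝ) * s < S.T δ ω'} := by
        refine tsum_congr fun k => ?_
        rw [lintegral_indicator (hmeas k), setLIntegral_const]
    _ ≤ ∑' k : ℕ, ENNReal.ofReal ((((k:ℝ) + 1) * s) ^ p) *
          ENNReal.ofReal (Real.exp 1 * Real.exp (-((k:ℝ) * s * φ))) := by
        refine ENNReal.tsum_le_tsum fun k => ?_
        refine mul_le_mul_right ?_ _
        have hks : 0 ≤ (k:ℝ) * s := mul_nonneg (Nat.cast_nonneg k) hs.le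
        have h1 : (ℙ : Measure Ω) {ω' | (k:ℝ) * s < S.T δ ω'}
            ≤ (ℙ : Measure Ω) {ω' | S.X ((k:ℝ) * s) ω' ≤ δ} :=
          measure_mono (S.tail_subset hks)
        refine le_trans h1 ?_
        rw [ENNReal.le_ofReal_iff_toReal_le (measure_ne_top _ _)
          (by positivity)]
        exact S.prob_le hδ hks
    _ = ∑' k : ℕ, ENNReal.ofReal
          (s ^ p * (Real.exp 1 * (((k:ℝ) + 1) ^ p * Real.exp (-1) ^ k))) := by
        refine tsum_congr fun k => ?_
        rw [← ENNReal.ofReal_mul (by positivity)]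
        congr 1
        have he1 : Real.exp (-((k:ℝ) * s * φ)) = Real.exp (-1) ^ k := by
          have hsφ : s * φ = 1 := inv_mul_cancel₀ hφ.ne'
          rw [← Real.exp_nat_mul]
          congr 1
          have : (k:ℝ) * s * φ = (k:ℝ) * (s * φ) := by ring
          rw [this, hsφ]; ring
        rw [Real.mul_rpow (by positivity) hs.le, he1]
        ring
    _ = ENNReal.ofReal (s ^ p *
          (Real.exp 1 * ∑' k : ℕ, ((k:ℝ) + 1) ^ p * Real.exp (-1) ^ k)) := by
        have hsum : Summable (fun k : ℕ => ((k:ℝ) + 1) ^ p * Real.exp (-1) ^ k) :=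
          summable_aux hp (Real.exp_pos _) (Real.exp_lt_one_iff.2 (by norm_num))
        rw [← ENNReal.ofReal_tsum_of_nonneg (fun k => by positivity)
          (by exact (hsum.mul_left _).mul_left _)]
        congr 1
        rw [tsum_mul_left, tsum_mul_left]
    _ = _ := rfl

lemma T_integrable (S : Subordinator Ω) (hinf : S.levy (Ioi (0:ℝ)) = ⊤)
    {δ : ℝ} (hδ : 0 < δ) : Integrable (S.T δ) (ℙ : Measure Ω) := by
  refine ⟨(S.T_measurable δ).aestronglyMeasurable, ?_⟩
  rw [hasFiniteIntegral_iff_ofReal (ae_of_all _ fun ω => S.T_nonneg δ ω)]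
  have h := S.lintegral_T_rpow_le hinf (p := 1) hδ le_rfl
  simp only [Real.rpow_one] at h
  exact lt_of_le_of_lt h ENNReal.ofReal_lt_top

lemma U_lower (S : Subordinator Ω) (hinf : S.levy (Ioi (0:ℝ)) = ⊤)
    {δ : ℝ} (hδ : 0 < δ) :
    (Real.exp (-2⁻¹) - Real.exp (-1)) / (1 - Real.exp (-1)) * (2 * S.Phi δ⁻¹)⁻¹
      ≤ S.U δ := by
  have hφ := S.Phi_pos hinf (inv_pos.2 hδ)
  set φ := S.Phi δ⁻¹ with hφdef
  set t₀ := (2 * φ)⁻¹ with ht₀def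
  have ht₀ : 0 < t₀ := by positivity
  set a := (Real.exp (-2⁻¹) - Real.exp (-1)) / (1 - Real.exp (-1)) with ha_def
  have he1 : Real.exp (-1:ℝ) < 1 := Real.exp_lt_one_iff.2 (by norm_num)
  have ha_pos : 0 < a :=
    div_pos (sub_pos.2 (Real.exp_lt_exp.2 (by norm_num))) (by linarith)
  set A := {ω | S.X t₀ ω ≤ δ} with hA_def
  have hA : MeasurableSet A := measurableSet_le (S.meas t₀) measurable_const
  have hP : a ≤ ((ℙ : Measure Ω) A).toReal := by
    have h := S.prob_ge hδ ht₀.le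
    have ht₀φ : t₀ * φ = 2⁻¹ := by
      rw [ht₀def]; field_simp
    rw [ht₀φ] at h
    rw [ha_def, div_le_iff₀ (by linarith)]
    linarith [h]
  have hae : ∀ᵐ ω ∂(ℙ : Measure Ω), A.indicator (fun _ => t₀) ω ≤ S.T δ ω := by
    have hnull := S.Tlen_top_null hinf hδ
    have hfin : ∀ᵐ ω ∂(ℙ : Measure Ω), S.Tlen δ ω ≠ ⊤ := by
      rw [ae_iff]; simpa using hnull
    filter_upwards [hfin] with ω hfinω
    by_cases hω : ω ∈ A
    · rw [Set.indicator_of_mem hω]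
      exact S.T_ge ht₀.le hfinω hω
    · rw [Set.indicator_of_notMem hω]
      exact S.T_nonneg δ ω
  have hint : Integrable (A.indicator fun _ => t₀) (ℙ : Measure Ω) :=
    (integrable_const t₀).indicator hA
  have h2 := integral_mono_ae hint (S.T_integrable hinf hδ) hae
  rw [integral_indicator_const t₀ hA, smul_eq_mul] at h2
  calc a * (2 * φ)⁻¹ = a * t₀ := rfl
    _ ≤ ((ℙ : Measure Ω) A).toReal * t₀ := mul_le_mul_of_nonneg_right hP ht₀.le
    _ ≤ S.U δ := h2

end Subordinator

/-- For every subordinator with infinite Lévy measure and every `m ≥ 1`,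
`limsup_{δ→0} E[T_δ^m]/U(δ)^m < ∞`, i.e. the ratio is eventually bounded as `δ → 0`. -/
theorem moment_ratio_bounded [IsProbabilityMeasure (ℙ : Measure Ω)]
    (S : Subordinator Ω) (hinf : S.levy (Ioi (0 : ℝ)) = ⊤) :
    ∀ m : ℝ, 1 ≤ m →
      IsBoundedUnder (· ≤ ·) (nhdsWithin (0 : ℝ) (Ioi 0))
        (fun δ : ℝ => (∫ ω, S.T δ ω ^ m) / S.U δ ^ m) := by
  intro m hm
  set K := ∑' k : ℕ, ((k:ℝ) + 1) ^ m * Real.exp (-1) ^ k with hK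
  set a := (Real.exp (-2⁻¹) - Real.exp (-1)) / (1 - Real.exp (-1)) with ha
  have he1 : Real.exp (-1:ℝ) < 1 := Real.exp_lt_one_iff.2 (by norm_num)
  have ha_pos : 0 < a :=
    div_pos (sub_pos.2 (Real.exp_lt_exp.2 (by norm_num))) (by linarith)
  have hK_nonneg : 0 ≤ K := tsum_nonneg fun k => by positivity
  refine ⟨Real.exp 1 * K / (a * 2⁻¹) ^ m, eventually_map.2 ?_⟩
  refine eventually_mem_nhdsWithin.mono fun δ hδ' => ?_
  have hδ : (0:ℝ) < δ := hδ'
  have hφ := S.Phi_pos hinf (inv_pos.2 hδ)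
  set φ := S.Phi δ⁻¹ with hφdef
  have hnum : (∫ ω, S.T δ ω ^ m) ≤ φ⁻¹ ^ m * (Real.exp 1 * K) := by
    have heq : (∫ ω, S.T δ ω ^ m)
        = (∫⁻ ω, ENNReal.ofReal (S.T δ ω ^ m)).toReal := by
      refine integral_eq_lintegral_of_nonneg_ae (ae_of_all _ fun ω => ?_) ?_
      · exact Real.rpow_nonneg (S.T_nonneg δ ω) m
      · have : Measurable fun ω => S.T δ ω ^ m := by
          have := S.T_measurable δ
          fun_prop
        exact this.aestronglyMeasurable
    rw [heq]
    have h := S.lintegral_T_rpow_le hinf hδ hm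
    have h2 := ENNReal.toReal_mono ENNReal.ofReal_ne_top h
    rwa [ENNReal.toReal_ofReal (by positivity)] at h2
  have hU : a * 2⁻¹ * φ⁻¹ ≤ S.U δ := by
    have h := S.U_lower hinf hδ
    calc a * 2⁻¹ * φ⁻¹ = a * (2 * φ)⁻¹ := by rw [mul_inv]; ring
      _ ≤ S.U δ := h
  have hUpos : 0 < S.U δ := lt_of_lt_of_le (by positivity) hU
  have hUm : (a * 2⁻¹) ^ m * φ⁻¹ ^ m ≤ S.U δ ^ m := by
    rw [← Real.mul_rpow (by positivity) (by positivity)]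
    exact Real.rpow_le_rpow (by positivity) hU (by linarith)
  have hd_pos : 0 < (a * 2⁻¹) ^ m * φ⁻¹ ^ m := by positivity
  have hmain : (∫ ω, S.T δ ω ^ m) / S.U δ ^ m
      ≤ (φ⁻¹ ^ m * (Real.exp 1 * K)) / ((a * 2⁻¹) ^ m * φ⁻¹ ^ m) :=
    div_le_div₀ (by positivity) hnum hd_pos hUm
  refine le_trans hmain (le_of_eq ?_)
  have hφm : φ⁻¹ ^ m ≠ 0 := ne_of_gt (Real.rpow_pos_of_pos (inv_pos.2 hφ) m)
  have ham : (a * 2⁻¹) ^ m ≠ 0 :=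
    ne_of_gt (Real.rpow_pos_of_pos (by positivity) m)
  field_simp
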